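/- (Hilbert space corollary.) Let U be an evolution family on a Hilbert space X and P(·) a compatible projection valued function with constants M ≥ 1, ε ≥ 0, ω > 0. Suppose there exist K ≥ 1, γ > ε, β ∈ [0,γ) such that for H(t)x = e^{γt}P(t)x + e^{-γt}Q(t)x there is a strongly continuous self-adjoint operator-valued function W: R_+ → B(X) with: (1) ⟨U(t,s)*W(t)U(t,s)x + ∫_s^t U(τ,s)*H(τ)*H(τ)U(τ,s)x dτ, x⟩ ≤ ⟨W(s)x, x⟩; (2) |⟨W(t)x,x⟩| ≤ K(e^{2(γ+β)t}||P(t)x||^2 + e^{-2(γ-β)t}||Q(t)x||^2); (3) ⟨W(t)P(t)x, P(t)x⟩ ≥ 0; (4) ⟨W(t)Q(t)x, Q(t)x⟩ ≤ 0, for all t ≥ s ≥ 0 and x ∈ X. Then U has an exponential dichotomy. -/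

import Mathlib

open Real MeasureTheory Filter Topology

/-- An evolution family of bounded linear operators on a Banach space `X`:
`U(t,t) = Id`, `U(t,s)U(s,t₀) = U(t,t₀)` for `t ≥ s ≥ t₀ ≥ 0`, and `(t,s) ↦ U(t,s)x`
is continuous for every `x`. -/
structure EvolutionFamily (X : Type*) [NormedAddCommGroup X] [NormedSpace ℝ X] where
  U : ℝ → ℝ → X →L[ℝ] X
  map_id : ∀ t : ℝ, U t t = ContinuousLinearMap.id ℝ X
  map_comp : ∀ {t s t₀ : ℝ}, 0 ≤ t₀ → t₀ ≤ s → s ≤ t → (U t s).comp (U s t₀) = U t t₀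
  cont : ∀ x : X, Continuous fun p : ℝ × ℝ => U p.1 p.2 x

/-- A projection valued function `P(·)` compatible with the evolution family `E`, with
growth constants `M ≥ 1`, `ε ≥ 0`, `ω > 0` (Definition 3 of the paper).  Here
`Q(t) x = x - P(t) x` is the complementary projection and `UQ s t` is the inverse of the
isomorphism `U(t,s) : Q(s)X → Q(t)X`, identified with `UQ s t ∘ Q(t)` on all of `X`. -/
structure Compatible {X : Type*} [NormedAddCommGroup X] [NormedSpace ℝ X]
    (E : EvolutionFamily X) (M ε ω : ℝ) where
  P : ℝ → X →L[ℝ] X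
  UQ : ℝ → ℝ → X →L[ℝ] X
  idem : ∀ t : ℝ, (P t).comp (P t) = P t
  contP : ∀ x : X, Continuous fun t : ℝ => P t x
  comm : ∀ {t s : ℝ}, 0 ≤ s → s ≤ t → (P t).comp (E.U t s) = (E.U t s).comp (P s)
  hM : 1 ≤ M
  hε : 0 ≤ ε
  hω : 0 < ω
  UQ_range : ∀ {t s : ℝ} (x : X), 0 ≤ s → s ≤ t → P s (UQ s t x) = 0
  UQ_proj : ∀ {t s : ℝ} (x : X), 0 ≤ s → s ≤ t → UQ s t (x - P t x) = UQ s t x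
  right_inv : ∀ {t s : ℝ} (x : X), 0 ≤ s → s ≤ t → E.U t s (UQ s t x) = x - P t x
  left_inv : ∀ {t s : ℝ} (x : X), 0 ≤ s → s ≤ t → UQ s t (E.U t s (x - P s x)) = x - P s x
  growP : ∀ {t s : ℝ} (x : X), 0 ≤ s → s ≤ t →
    ‖E.U t s (P s x)‖ ≤ M * Real.exp (ε * s) * Real.exp (ω * (t - s)) * ‖P s x‖
  growQ : ∀ {t s : ℝ} (x : X), 0 ≤ s → s ≤ t →
    ‖UQ s t (x - P t x)‖ ≤ M * Real.exp (ε * s) * Real.exp (ω * (t - s)) * ‖x - P t x‖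



section aux
open scoped RealInnerProductSpace

variable {X : Type*} [NormedAddCommGroup X] [InnerProductSpace ℝ X] [CompleteSpace X]

private lemma exp_sq' (x : ℝ) : Real.exp x ^ 2 = Real.exp (2 * x) := by
  rw [pow_two, ← Real.exp_add]; ring_nf

lemma loc_bdd (f : ℝ → X →L[ℝ] X) (hf : ∀ x : X, Continuous fun t => f t x) (a b : ℝ) :
    ∃ C : ℝ, 0 ≤ C ∧ ∀ τ ∈ Set.Icc a b, ‖f τ‖ ≤ C := by
  have hpt : ∀ x : X, ∃ C, ∀ τ : Set.Icc a b, ‖f τ.1 x‖ ≤ C := by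
    intro x
    obtain ⟨C, hC⟩ := isCompact_Icc.exists_bound_of_continuousOn
      (f := fun τ => f τ x) (hf x).continuousOn
    exact ⟨C, fun i => hC i i.2⟩
  obtain ⟨C, hC⟩ := banach_steinhaus (g := fun τ : Set.Icc a b => f τ.1) hpt
  exact ⟨max C 0, le_max_right _ _, fun τ hτ => (hC ⟨τ, hτ⟩).trans (le_max_left _ _)⟩

lemma cont_apply (f : ℝ → X →L[ℝ] X) (hf : ∀ x : X, Continuous fun t => f t x)
    (u : ℝ → X) (hu : Continuous u) : Continuous fun t => f t (u t) := by
  rw [continuous_iff_continuousAt]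
  intro t₀
  obtain ⟨C, hC0, hC⟩ := loc_bdd f hf (t₀ - 1) (t₀ + 1)
  rw [ContinuousAt, tendsto_iff_norm_sub_tendsto_zero]
  apply squeeze_zero' (Filter.Eventually.of_forall fun τ => norm_nonneg _)
  · filter_upwards [Icc_mem_nhds (a := t₀ - 1) (b := t₀ + 1) (by linarith) (by linarith)] with τ hτ
    calc ‖f τ (u τ) - f t₀ (u t₀)‖
        = ‖f τ (u τ - u t₀) + (f τ (u t₀) - f t₀ (u t₀))‖ := by rw [map_sub]; congr 1; abel
      _ ≤ ‖f τ (u τ - u t₀)‖ + ‖f τ (u t₀) - f t₀ (u t₀)‖ := norm_add_le _ _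
      _ ≤ C * ‖u τ - u t₀‖ + ‖f τ (u t₀) - f t₀ (u t₀)‖ := by
          have h1 := ((f τ).le_opNorm (u τ - u t₀)).trans
            (mul_le_mul_of_nonneg_right (hC τ hτ) (norm_nonneg _))
          linarith
  · have h1 : Tendsto (fun τ => ‖u τ - u t₀‖) (nhds t₀) (nhds 0) :=
      tendsto_iff_norm_sub_tendsto_zero.mp (hu.tendsto t₀)
    have h2 : Tendsto (fun τ => ‖f τ (u t₀) - f t₀ (u t₀)‖) (nhds t₀) (nhds 0) :=
      tendsto_iff_norm_sub_tendsto_zero.mp ((hf (u t₀)).tendsto t₀)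
    have h3 := (h1.const_mul C).add h2
    simpa using h3

end aux

section aux2
open scoped RealInnerProductSpace

variable {X : Type*} [NormedAddCommGroup X] [InnerProductSpace ℝ X] [CompleteSpace X]

lemma weak_cont_stronglyMeasurable (F : ℝ → X)
    (hF : ∀ y : X, Continuous fun τ => ⟪F τ, y⟫) : StronglyMeasurable F := by
  classical
  obtain ⟨e, he⟩ := exists_surjective_nat ℚ
  set d : ℕ → X := fun n => F ((e n : ℚ) : ℝ) with hd
  have hmem : ∀ τ : ℝ, F τ ∈ (Submodule.span ℝ (Set.range d)).topologicalClosure := by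
    intro τ
    rw [← Submodule.orthogonal_orthogonal_eq_closure, Submodule.mem_orthogonal]
    intro w hw
    have hw0 : ∀ n, ⟪d n, w⟫ = 0 := fun n =>
      (Submodule.mem_orthogonal _ w).mp hw (d n) (Submodule.subset_span ⟨n, rfl⟩)
    have hzero : ∀ q : ℚ, ⟪F ((q : ℚ) : ℝ), w⟫ = 0 := by
      intro q
      obtain ⟨n, rfl⟩ := he q
      exact hw0 n
    have heq : (fun τ' : ℝ => ⟪F τ', w⟫) = fun _ => (0 : ℝ) := by
      apply Continuous.ext_on Rat.denseRange_cast (hF w) continuous_const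
      rintro _ ⟨q, rfl⟩
      exact hzero q
    have h0 : ⟪F τ, w⟫ = 0 := congrFun heq τ
    rw [real_inner_comm]; exact h0
  set Wn : ℕ → Submodule ℝ X := fun n => Submodule.span ℝ (d '' Set.Iic n) with hWn
  have hfin : ∀ n, FiniteDimensional ℝ (Wn n) := fun n =>
    FiniteDimensional.span_of_finite ℝ ((Set.finite_Iic n).image d)
  have hproj : ∀ n, Submodule.HasOrthogonalProjection (Wn n) := by
    intro n; haveI := hfin n; infer_instance
  have hmono : Monotone Wn := fun i j hij =>
    Submodule.span_mono (Set.image_mono (Set.Iic_subset_Iic.2 (by exact_mod_cast hij)))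
  have hcontn : ∀ n, Continuous fun τ =>
      (@Submodule.orthogonalProjectionOnto ℝ X _ _ _ (Wn n) (hproj n) (F τ) : X) := by
    intro n
    haveI := hfin n
    haveI := hproj n
    set b := stdOrthonormalBasis ℝ (Wn n) with hb
    have hrw : (fun τ => ((Wn n).orthogonalProjectionOnto (F τ) : X))
        = fun τ => ∑ i, ⟪((b i : X)), F τ⟫ • (b i : X) := by
      funext τ
      rw [b.orthogonalProjectionOnto_apply_eq_sum]
      push_cast
      rfl
    rw [hrw]
    refine continuous_finset_sum _ fun i _ => Continuous.smul ?_ continuous_const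
    have := hF (b i : X)
    simpa [real_inner_comm] using this
  have happrox : ∀ τ : ℝ, Tendsto
      (fun n => (@Submodule.orthogonalProjectionOnto ℝ X _ _ _ (Wn n) (hproj n) (F τ) : X)) atTop (𝓝 (F τ)) := by
    intro τ
    rw [NormedAddCommGroup.tendsto_atTop]
    intro δ hδ
    have hτV := hmem τ
    have hτV' : F τ ∈ closure ((Submodule.span ℝ (Set.range d) : Submodule ℝ X) : Set X) := hτV
    obtain ⟨y, hyV, hy⟩ := Metric.mem_closure_iff.mp hτV' δ hδ
    have hyiSup : y ∈ ⨆ n, Wn n := by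
      have h1 : Submodule.span ℝ (Set.range d) ≤ ⨆ n, Wn n := by
        rw [Submodule.span_le]
        rintro _ ⟨m, rfl⟩
        exact Submodule.mem_iSup_of_mem m
          (Submodule.subset_span ⟨m, Set.self_mem_Iic, rfl⟩)
      exact h1 hyV
    obtain ⟨N, hyN⟩ := (Submodule.mem_iSup_of_directed Wn hmono.directed_le).mp hyiSup
    refine ⟨N, fun n hn => ?_⟩
    haveI := hfin n
    haveI := hproj n
    have hyn : y ∈ Wn n := hmono hn hyN
    have hmin : ‖F τ - ((Wn n).orthogonalProjectionOnto (F τ) : X)‖ ≤ ‖F τ - y‖ := by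
      rw [← Submodule.starProjection_apply, Submodule.starProjection_minimal]
      exact ciInf_le ⟨0, by rintro r ⟨v, rfl⟩; exact norm_nonneg _⟩ (⟨y, hyn⟩ : Wn n)
    have hdist : ‖F τ - y‖ < δ := by
      rw [← dist_eq_norm]; exact hy
    calc ‖((Wn n).orthogonalProjectionOnto (F τ) : X) - F τ‖
        = ‖F τ - ((Wn n).orthogonalProjectionOnto (F τ) : X)‖ := norm_sub_rev _ _
      _ ≤ ‖F τ - y‖ := hmin
      _ < δ := hdist
  exact stronglyMeasurable_of_tendsto atTop (fun n => (hcontn n).stronglyMeasurable)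
    (tendsto_pi_nhds.2 happrox)

end aux2

section key
open scoped RealInnerProductSpace

variable {X : Type*} [NormedAddCommGroup X] [InnerProductSpace ℝ X] [CompleteSpace X]

lemma key_ineq (E : EvolutionFamily X) {M ε ω : ℝ} (C : Compatible E M ε ω) (γ : ℝ)
    (H : ℝ → X →L[ℝ] X)
    (hH : ∀ (t : ℝ) (x : X),
      H t x = Real.exp (γ * t) • C.P t x + Real.exp (-γ * t) • (x - C.P t x))
    (W : ℝ → X →L[ℝ] X)
    (h1 : ∀ (t s : ℝ) (x : X), 0 ≤ s → s ≤ t →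
      ⟪ContinuousLinearMap.adjoint (E.U t s) (W t (E.U t s x)) +
          ∫ τ in s..t, ContinuousLinearMap.adjoint (E.U τ s)
            (ContinuousLinearMap.adjoint (H τ) (H τ (E.U τ s x))), x⟫ ≤ ⟪W s x, x⟫)
    (t s : ℝ) (x : X) (hs : 0 ≤ s) (hst : s ≤ t) :
    ⟪W t (E.U t s x), E.U t s x⟫ + (∫ τ in s..t, ‖H τ (E.U τ s x)‖ ^ 2) ≤ ⟪W s x, x⟫ := by
  have contU : ∀ y : X, Continuous fun τ => E.U τ s y := fun y =>
    (E.cont y).comp (continuous_id.prodMk continuous_const)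
  have contH : ∀ y : X, Continuous fun τ => H τ y := by
    intro y
    have hrw : (fun τ => H τ y)
        = fun τ => Real.exp (γ * τ) • C.P τ y + Real.exp (-γ * τ) • (y - C.P τ y) :=
      funext fun τ => hH τ y
    rw [hrw]
    exact ((Real.continuous_exp.comp (continuous_const.mul continuous_id)).smul
      (C.contP y)).add ((Real.continuous_exp.comp (continuous_const.mul continuous_id)).smul
      (continuous_const.sub (C.contP y)))
  have contHU : ∀ y : X, Continuous fun τ => H τ (E.U τ s y) := fun y =>
    cont_apply H contH _ (contU y)
  set F : ℝ → X := fun τ => ContinuousLinearMap.adjoint (E.U τ s)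
      (ContinuousLinearMap.adjoint (H τ) (H τ (E.U τ s x))) with hF
  have hFinner : ∀ (τ : ℝ) (y : X), ⟪F τ, y⟫ = ⟪H τ (E.U τ s x), H τ (E.U τ s y)⟫ := by
    intro τ y
    rw [hF]
    simp only
    rw [ContinuousLinearMap.adjoint_inner_left, ContinuousLinearMap.adjoint_inner_left]
  have hFw : ∀ y : X, Continuous fun τ => ⟪F τ, y⟫ := by
    intro y
    have hrw : (fun τ => ⟪F τ, y⟫) = fun τ => ⟪H τ (E.U τ s x), H τ (E.U τ s y)⟫ :=
      funext fun τ => hFinner τ y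
    rw [hrw]
    exact (contHU x).inner (contHU y)
  have hFSM : StronglyMeasurable F := weak_cont_stronglyMeasurable F hFw
  obtain ⟨CU, hCU0, hCU⟩ := loc_bdd (fun τ => E.U τ s) contU s t
  obtain ⟨CH, hCH0, hCH⟩ := loc_bdd H contH s t
  have adj_le : ∀ (A : X →L[ℝ] X) (v : X),
      ‖ContinuousLinearMap.adjoint A v‖ ≤ ‖A‖ * ‖v‖ := by
    intro A v
    have h := (ContinuousLinearMap.adjoint A).le_opNorm v
    rwa [LinearIsometryEquiv.norm_map] at h
  have hFbdd : ∀ τ ∈ Set.Icc s t, ‖F τ‖ ≤ CU * (CH * (CH * (CU * ‖x‖))) := by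
    intro τ hτ
    have b1 : ‖E.U τ s x‖ ≤ CU * ‖x‖ :=
      ((E.U τ s).le_opNorm x).trans (mul_le_mul_of_nonneg_right (hCU τ hτ) (norm_nonneg _))
    have b2 : ‖H τ (E.U τ s x)‖ ≤ CH * (CU * ‖x‖) :=
      ((H τ).le_opNorm _).trans (by
        have := mul_le_mul (hCH τ hτ) b1 (norm_nonneg _) hCH0
        linarith)
    have b3 : ‖ContinuousLinearMap.adjoint (H τ) (H τ (E.U τ s x))‖
        ≤ CH * (CH * (CU * ‖x‖)) :=
      (adj_le _ _).trans (mul_le_mul (hCH τ hτ) b2 (norm_nonneg _) hCH0)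
    calc ‖F τ‖ ≤ ‖E.U τ s‖ * ‖ContinuousLinearMap.adjoint (H τ) (H τ (E.U τ s x))‖ :=
          adj_le _ _
      _ ≤ CU * (CH * (CH * (CU * ‖x‖))) := by
          apply mul_le_mul (hCU τ hτ) b3 (norm_nonneg _) hCU0
  have hFint : IntervalIntegrable F volume s t := by
    rw [intervalIntegrable_iff_integrableOn_Ioc_of_le hst]
    apply Integrable.mono' (integrable_const (CU * (CH * (CH * (CU * ‖x‖)))))
      hFSM.aestronglyMeasurable.restrict
    filter_upwards [ae_restrict_mem measurableSet_Ioc] with τ hτ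
    exact hFbdd τ ⟨le_of_lt hτ.1, hτ.2⟩
  have h := h1 t s x hs hst
  rw [← hF] at h
  rw [inner_add_left] at h
  have e1 : ⟪ContinuousLinearMap.adjoint (E.U t s) (W t (E.U t s x)), x⟫
      = ⟪W t (E.U t s x), E.U t s x⟫ := ContinuousLinearMap.adjoint_inner_left _ _ _
  have e2 : ⟪(∫ τ in s..t, F τ), x⟫ = ∫ τ in s..t, ‖H τ (E.U τ s x)‖ ^ 2 := by
    rw [real_inner_comm]
    have hcomm := (innerSL ℝ x).intervalIntegral_comp_comm hFint
    simp only [innerSL_apply_apply] at hcomm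
    rw [← hcomm]
    apply intervalIntegral.integral_congr
    intro τ _
    show ⟪x, F τ⟫ = ‖H τ (E.U τ s x)‖ ^ 2
    rw [real_inner_comm, hFinner τ x, real_inner_self_eq_norm_sq]
  linarith [h, e1, e2]

end key

set_option maxHeartbeats 4000000 in
open scoped RealInnerProductSpace in
/-- **Hilbert space corollary.**  Let `E` be an evolution family on a Hilbert space `X`
and `P(·)` a compatible projection valued function with constants `M ≥ 1`, `ε ≥ 0`,
`ω > 0`.  Suppose there exist `K ≥ 1`, `γ > ε`, `β ∈ [0,γ)` such that for
`H(t)x = e^{γt}P(t)x + e^{-γt}Q(t)x` there is a strongly continuous self-adjoint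
`W : ℝ₊ → B(X)` with
(1) `⟨U(t,s)*W(t)U(t,s)x + ∫_s^t U(τ,s)*H(τ)*H(τ)U(τ,s)x dτ, x⟩ ≤ ⟨W(s)x, x⟩`;
(2) `|⟨W(t)x,x⟩| ≤ K(e^{2(γ+β)t}‖P(t)x‖² + e^{-2(γ-β)t}‖Q(t)x‖²)`;
(3) `⟨W(t)P(t)x, P(t)x⟩ ≥ 0`; (4) `⟨W(t)Q(t)x, Q(t)x⟩ ≤ 0`,
for all `t ≥ s ≥ 0` and `x ∈ X`.  Then `E` has an exponential dichotomy. -/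
theorem stmt_18 {X : Type*} [NormedAddCommGroup X] [InnerProductSpace ℝ X]
    [CompleteSpace X]
    (E : EvolutionFamily X) (M ε ω : ℝ) (C : Compatible E M ε ω)
    (K γ β : ℝ) (hK : 1 ≤ K) (hγ : ε < γ) (hβ0 : 0 ≤ β) (hβγ : β < γ)
    (H : ℝ → X →L[ℝ] X)
    (hH : ∀ (t : ℝ) (x : X),
      H t x = Real.exp (γ * t) • C.P t x + Real.exp (-γ * t) • (x - C.P t x))
    (W : ℝ → X →L[ℝ] X) (hWcont : ∀ x : X, Continuous fun t : ℝ => W t x)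
    (hWsa : ∀ t : ℝ, ContinuousLinearMap.adjoint (W t) = W t)
    (h1 : ∀ (t s : ℝ) (x : X), 0 ≤ s → s ≤ t →
      ⟪ContinuousLinearMap.adjoint (E.U t s) (W t (E.U t s x)) +
          ∫ τ in s..t, ContinuousLinearMap.adjoint (E.U τ s)
            (ContinuousLinearMap.adjoint (H τ) (H τ (E.U τ s x))), x⟫ ≤ ⟪W s x, x⟫)
    (h2 : ∀ (t : ℝ) (x : X), 0 ≤ t →
      |⟪W t x, x⟫| ≤ K * (Real.exp (2 * (γ + β) * t) * ‖C.P t x‖ ^ 2 +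
        Real.exp (-2 * (γ - β) * t) * ‖x - C.P t x‖ ^ 2))
    (h3 : ∀ (t : ℝ) (x : X), 0 ≤ t → 0 ≤ ⟪W t (C.P t x), C.P t x⟫)
    (h4 : ∀ (t : ℝ) (x : X), 0 ≤ t → ⟪W t (x - C.P t x), x - C.P t x⟫ ≤ 0) :
    ∃ N₁ N₂ α₁ α₂ ν₁ ν₂ : ℝ, 1 ≤ N₁ ∧ 1 ≤ N₂ ∧ 0 ≤ α₁ ∧ 0 ≤ α₂ ∧ 0 < ν₁ ∧ 0 < ν₂ ∧
      α₂ < ν₂ ∧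
      (∀ (t s : ℝ) (x : X), 0 ≤ s → s ≤ t →
        ‖E.U t s (C.P s x)‖ ≤
          N₁ * Real.exp (α₁ * s) * Real.exp (-ν₁ * (t - s)) * ‖C.P s x‖) ∧
      (∀ (t s : ℝ) (x : X), 0 ≤ s → s ≤ t →
        ‖C.UQ s t (x - C.P t x)‖ ≤
          N₂ * Real.exp (α₂ * t) * Real.exp (-ν₂ * (t - s)) * ‖x - C.P t x‖) := by
  
  classical
  have hK0 : (0:ℝ) < K := lt_of_lt_of_le one_pos hK
  have hM0 : (0:ℝ) < M := lt_of_lt_of_le one_pos C.hM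
  have hε0 := C.hε
  have hω0 := C.hω
  have hγ0 : 0 < γ := lt_of_le_of_lt C.hε hγ
  set ν₁ : ℝ := γ - ε with hν₁
  set ν₂ : ℝ := γ + ε with hν₂
  set α₁ : ℝ := β + ε with hα₁
  set a : ℝ := 2 * (γ - ε + ω) with ha
  set b : ℝ := 2 * (γ + ω) with hb
  have ha0 : 0 < a := by rw [ha]; linarith
  have hb0 : 0 < b := by rw [hb]; linarith
  have hν₁0 : 0 < ν₁ := by rw [hν₁]; linarith
  have hν₂0 : 0 < ν₂ := by rw [hν₂]; linarith
  have hα₁0 : 0 ≤ α₁ := by rw [hα₁]; linarith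
  set N₁ : ℝ := M ^ 2 * K * Real.exp a + M * Real.exp (ω + ν₁) + 1 with hN₁
  set N₂ : ℝ := M ^ 2 * K * Real.exp b + M * Real.exp (ω + ν₂) + 1 with hN₂
  have hDa0 : 0 ≤ M ^ 2 * K * Real.exp a :=
    mul_nonneg (mul_nonneg (sq_nonneg M) hK0.le) (Real.exp_pos a).le
  have hDb0 : 0 ≤ M ^ 2 * K * Real.exp b :=
    mul_nonneg (mul_nonneg (sq_nonneg M) hK0.le) (Real.exp_pos b).le
  have hMe1 : 0 ≤ M * Real.exp (ω + ν₁) := mul_nonneg hM0.le (Real.exp_pos _).le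
  have hMe2 : 0 ≤ M * Real.exp (ω + ν₂) := mul_nonneg hM0.le (Real.exp_pos _).le
  have hN₁1 : 1 ≤ N₁ := by rw [hN₁]; linarith
  have hN₂1 : 1 ≤ N₂ := by rw [hN₂]; linarith
  have contU : ∀ (s : ℝ) (y : X), Continuous fun τ => E.U τ s y := fun s y =>
    (E.cont y).comp (continuous_id.prodMk continuous_const)
  have contH : ∀ y : X, Continuous fun τ => H τ y := by
    intro y
    have hrw : (fun τ => H τ y)
        = fun τ => Real.exp (γ * τ) • C.P τ y + Real.exp (-γ * τ) • (y - C.P τ y) :=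
      funext fun τ => hH τ y
    rw [hrw]
    exact ((Real.continuous_exp.comp (continuous_const.mul continuous_id)).smul
      (C.contP y)).add ((Real.continuous_exp.comp (continuous_const.mul continuous_id)).smul
      (continuous_const.sub (C.contP y)))
  have contHU : ∀ (s : ℝ) (y : X), Continuous fun τ => H τ (E.U τ s y) := fun s y =>
    cont_apply H contH _ (contU s y)
  refine ⟨N₁, N₂, α₁, α₁, ν₁, ν₂, hN₁1, hN₂1, hα₁0, hα₁0, hν₁0, hν₂0,
    (by rw [hα₁, hν₂]; linarith), ?_, ?_⟩
  · -- stable part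
    intro t s x₀ hs hst
    have ht0 : 0 ≤ t := hs.trans hst
    set y : X := C.P s x₀ with hy
    have hPy : C.P s y = y := by
      rw [hy]
      have h := congrArg (fun f : X →L[ℝ] X => f x₀) (C.idem s)
      simpa using h
    by_cases hcase : t ≤ s + 1
    · have hgrow : ‖E.U t s y‖ ≤ M * Real.exp (ε * s) * Real.exp (ω * (t - s)) * ‖y‖ := by
        rw [hy]; exact C.growP x₀ hs hst
      refine hgrow.trans ?_
      have he1 : Real.exp (ε * s) ≤ Real.exp (α₁ * s) :=
        Real.exp_le_exp.2 (by rw [hα₁]; nlinarith)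
      have he2 : Real.exp (ω * (t - s)) ≤ Real.exp (ω + ν₁) * Real.exp (-ν₁ * (t - s)) := by
        rw [← Real.exp_add]
        apply Real.exp_le_exp.2
        nlinarith [hν₁0.le, hω0.le, sub_nonneg.2 hst]
      calc M * Real.exp (ε * s) * Real.exp (ω * (t - s)) * ‖y‖
          ≤ M * Real.exp (α₁ * s) * (Real.exp (ω + ν₁) * Real.exp (-ν₁ * (t - s))) * ‖y‖ := by
            gcongr
        _ = (M * Real.exp (ω + ν₁)) * Real.exp (α₁ * s) * Real.exp (-ν₁ * (t - s)) * ‖y‖ := by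
            ring
        _ ≤ N₁ * Real.exp (α₁ * s) * Real.exp (-ν₁ * (t - s)) * ‖y‖ := by
            gcongr
            rw [hN₁]; linarith
    · push_neg at hcase
      have hs1t : s + 1 ≤ t := hcase.le
      have hkey := key_ineq E C γ H hH W h1 t s y hs hst
      have hPu : ∀ τ, s ≤ τ → C.P τ (E.U τ s y) = E.U τ s y := by
        intro τ hτ
        have h := congrArg (fun f : X →L[ℝ] X => f y) (C.comm hs hτ)
        simp only [ContinuousLinearMap.comp_apply] at h
        rw [h, hPy]
      have hWt : 0 ≤ ⟪W t (E.U t s y), E.U t s y⟫ := by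
        have h := h3 t (E.U t s y) ht0
        rwa [hPu t hst] at h
      have hWs : ⟪W s y, y⟫ ≤ K * (Real.exp (2 * (γ + β) * s) * ‖y‖ ^ 2) := by
        have h := (le_abs_self _).trans (h2 s y hs)
        rw [hPy, sub_self, norm_zero] at h
        calc ⟪W s y, y⟫
            ≤ K * (Real.exp (2 * (γ + β) * s) * ‖y‖ ^ 2
              + Real.exp (-2 * (γ - β) * s) * 0 ^ 2) := h
          _ = K * (Real.exp (2 * (γ + β) * s) * ‖y‖ ^ 2) := by ring
      have hI : (∫ τ in s..t, ‖H τ (E.U τ s y)‖ ^ 2)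
          ≤ K * (Real.exp (2 * (γ + β) * s) * ‖y‖ ^ 2) := by linarith
      have hint1 : IntervalIntegrable (fun τ => ‖H τ (E.U τ s y)‖ ^ 2) volume s (t - 1) :=
        (((contHU s y).norm.pow 2)).intervalIntegrable _ _
      have hint2 : IntervalIntegrable (fun τ => ‖H τ (E.U τ s y)‖ ^ 2) volume (t - 1) t :=
        (((contHU s y).norm.pow 2)).intervalIntegrable _ _
      have hsplit := intervalIntegral.integral_add_adjacent_intervals hint1 hint2
      have hnn : 0 ≤ ∫ τ in s..(t - 1), ‖H τ (E.U τ s y)‖ ^ 2 :=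
        intervalIntegral.integral_nonneg (by linarith) (fun τ _ => by positivity)
      have hI2 : (∫ τ in (t - 1)..t, ‖H τ (E.U τ s y)‖ ^ 2)
          ≤ K * (Real.exp (2 * (γ + β) * s) * ‖y‖ ^ 2) := by linarith
      have hpt : ∀ τ ∈ Set.Icc (t - 1) t,
          Real.exp (a * (t - 1)) * Real.exp (-(ω * t)) ^ 2 * ‖E.U t s y‖ ^ 2
            ≤ M ^ 2 * ‖H τ (E.U τ s y)‖ ^ 2 := by
        intro τ hτ
        have hsτ : s ≤ τ := le_trans (by linarith) hτ.1
        have h0τ : 0 ≤ τ := hs.trans hsτ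
        have hgrow := C.growP (E.U τ s y) h0τ hτ.2
        rw [hPu τ hsτ] at hgrow
        have hcomp := congrArg (fun f : X →L[ℝ] X => f y) (E.map_comp hs hsτ hτ.2)
        simp only [ContinuousLinearMap.comp_apply] at hcomp
        rw [hcomp] at hgrow
        have hHn : ‖H τ (E.U τ s y)‖ = Real.exp (γ * τ) * ‖E.U τ s y‖ := by
          rw [hH τ (E.U τ s y), hPu τ hsτ, sub_self, smul_zero, add_zero, norm_smul,
            Real.norm_eq_abs, abs_of_pos (Real.exp_pos _)]
        rw [hHn]
        have hg2 : ‖E.U t s y‖ ^ 2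
            ≤ M ^ 2 * Real.exp (ε * τ) ^ 2 * Real.exp (ω * (t - τ)) ^ 2 * ‖E.U τ s y‖ ^ 2 := by
          have h := pow_le_pow_left₀ (norm_nonneg _) hgrow 2
          calc ‖E.U t s y‖ ^ 2
              ≤ (M * Real.exp (ε * τ) * Real.exp (ω * (t - τ)) * ‖E.U τ s y‖) ^ 2 := h
            _ = M ^ 2 * Real.exp (ε * τ) ^ 2 * Real.exp (ω * (t - τ)) ^ 2
                * ‖E.U τ s y‖ ^ 2 := by ring
        have hexp : Real.exp (a * (t - 1)) * Real.exp (-(ω * t)) ^ 2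
              * (Real.exp (ε * τ) ^ 2 * Real.exp (ω * (t - τ)) ^ 2)
            ≤ Real.exp (γ * τ) ^ 2 := by
          rw [exp_sq', exp_sq', exp_sq', exp_sq', ← Real.exp_add, ← Real.exp_add,
            ← Real.exp_add]
          apply Real.exp_le_exp.2
          rw [ha]
          nlinarith [mul_nonneg (by linarith : (0:ℝ) ≤ 2 * (γ - ε + ω))
            (sub_nonneg.2 hτ.1)]
        calc Real.exp (a * (t - 1)) * Real.exp (-(ω * t)) ^ 2 * ‖E.U t s y‖ ^ 2
            ≤ Real.exp (a * (t - 1)) * Real.exp (-(ω * t)) ^ 2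
              * (M ^ 2 * Real.exp (ε * τ) ^ 2 * Real.exp (ω * (t - τ)) ^ 2
                * ‖E.U τ s y‖ ^ 2) := by gcongr
          _ = (Real.exp (a * (t - 1)) * Real.exp (-(ω * t)) ^ 2
              * (Real.exp (ε * τ) ^ 2 * Real.exp (ω * (t - τ)) ^ 2))
              * (M ^ 2 * ‖E.U τ s y‖ ^ 2) := by ring
          _ ≤ Real.exp (γ * τ) ^ 2 * (M ^ 2 * ‖E.U τ s y‖ ^ 2) :=
              mul_le_mul_of_nonneg_right hexp (by positivity)
          _ = M ^ 2 * (Real.exp (γ * τ) * ‖E.U τ s y‖) ^ 2 := by ring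
      have hmono := intervalIntegral.integral_mono_on (μ := volume) (by linarith : t - 1 ≤ t)
        intervalIntegrable_const
        ((continuous_const.mul ((contHU s y).norm.pow 2)).intervalIntegrable _ _) hpt
      simp only [Pi.mul_apply, Pi.pow_apply] at hmono
      rw [intervalIntegral.integral_const, show t - (t - 1) = (1:ℝ) by ring, one_smul,
        intervalIntegral.integral_const_mul] at hmono
      have hfinal : Real.exp (a * (t - 1)) * Real.exp (-(ω * t)) ^ 2 * ‖E.U t s y‖ ^ 2
          ≤ M ^ 2 * (K * (Real.exp (2 * (γ + β) * s) * ‖y‖ ^ 2)) := by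
        have h' := mul_le_mul_of_nonneg_left hI2 (sq_nonneg M)
        linarith
      have hpos : 0 < Real.exp (a * (t - 1)) * Real.exp (-(ω * t)) ^ 2 := by positivity
      have hgoal2 : ‖E.U t s y‖ ^ 2
          ≤ (N₁ * Real.exp (α₁ * s) * Real.exp (-ν₁ * (t - s)) * ‖y‖) ^ 2 := by
        rw [← mul_le_mul_iff_right₀ hpos]
        refine le_trans hfinal ?_
        have hid : Real.exp a * (Real.exp (a * (t - 1)) * Real.exp (-(ω * t)) ^ 2
              * (Real.exp (α₁ * s) * Real.exp (-ν₁ * (t - s))) ^ 2)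
            = Real.exp (2 * (γ + β) * s) := by
          rw [← Real.exp_add (α₁ * s), exp_sq', exp_sq', ← Real.exp_add, ← Real.exp_add,
            ← Real.exp_add]
          congr 1
          rw [ha, hα₁, hν₁]; ring
        have hDN : M ^ 2 * K * Real.exp a ≤ N₁ ^ 2 := by
          have h1 : M ^ 2 * K * Real.exp a ≤ N₁ := by rw [hN₁]; linarith
          nlinarith [hN₁1]
        calc M ^ 2 * (K * (Real.exp (2 * (γ + β) * s) * ‖y‖ ^ 2))
            = (M ^ 2 * K) * Real.exp (2 * (γ + β) * s) * ‖y‖ ^ 2 := by ring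
          _ = (M ^ 2 * K * Real.exp a) * (Real.exp (a * (t - 1)) * Real.exp (-(ω * t)) ^ 2
              * (Real.exp (α₁ * s) * Real.exp (-ν₁ * (t - s))) ^ 2) * ‖y‖ ^ 2 := by
              rw [← hid]; ring
          _ ≤ N₁ ^ 2 * (Real.exp (a * (t - 1)) * Real.exp (-(ω * t)) ^ 2
              * (Real.exp (α₁ * s) * Real.exp (-ν₁ * (t - s))) ^ 2) * ‖y‖ ^ 2 := by
              gcongr
          _ = Real.exp (a * (t - 1)) * Real.exp (-(ω * t)) ^ 2
              * (N₁ * Real.exp (α₁ * s) * Real.exp (-ν₁ * (t - s)) * ‖y‖) ^ 2 := by ring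
      exact le_of_pow_le_pow_left₀ two_ne_zero (by positivity) hgoal2
  · -- unstable part
    intro t s x₀ hs hst
    have ht0 : 0 ≤ t := hs.trans hst
    set y : X := x₀ - C.P t x₀ with hy
    set z : X := C.UQ s t y with hz
    have hPty : C.P t y = 0 := by
      have hidem : C.P t (C.P t x₀) = C.P t x₀ := by
        have h := congrArg (fun f : X →L[ℝ] X => f x₀) (C.idem t)
        simpa using h
      rw [hy, map_sub, hidem, sub_self]
    have hPz : C.P s z = 0 := by rw [hz]; exact C.UQ_range y hs hst
    have hUz : E.U t s z = y := by
      rw [hz]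
      have h := C.right_inv y hs hst
      rwa [hPty, sub_zero] at h
    by_cases hcase : t ≤ s + 1
    · have hgrow : ‖z‖ ≤ M * Real.exp (ε * s) * Real.exp (ω * (t - s)) * ‖y‖ := by
        rw [hz]
        have h := C.growQ y hs hst
        rwa [hPty, sub_zero] at h
      refine hgrow.trans ?_
      have he1 : Real.exp (ε * s) ≤ Real.exp (α₁ * t) :=
        Real.exp_le_exp.2 (by rw [hα₁]; nlinarith)
      have he2 : Real.exp (ω * (t - s)) ≤ Real.exp (ω + ν₂) * Real.exp (-ν₂ * (t - s)) := by
        rw [← Real.exp_add]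
        apply Real.exp_le_exp.2
        nlinarith [hν₂0.le, hω0.le, sub_nonneg.2 hst]
      calc M * Real.exp (ε * s) * Real.exp (ω * (t - s)) * ‖y‖
          ≤ M * Real.exp (α₁ * t) * (Real.exp (ω + ν₂) * Real.exp (-ν₂ * (t - s))) * ‖y‖ := by
            gcongr
        _ = (M * Real.exp (ω + ν₂)) * Real.exp (α₁ * t) * Real.exp (-ν₂ * (t - s)) * ‖y‖ := by
            ring
        _ ≤ N₂ * Real.exp (α₁ * t) * Real.exp (-ν₂ * (t - s)) * ‖y‖ := by
            gcongr
            rw [hN₂]; linarith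
    · push_neg at hcase
      have hs1t : s + 1 ≤ t := hcase.le
      have hkey := key_ineq E C γ H hH W h1 t s z hs hst
      rw [hUz] at hkey
      have hQu : ∀ τ, s ≤ τ → C.P τ (E.U τ s z) = 0 := by
        intro τ hτ
        have h := congrArg (fun f : X →L[ℝ] X => f z) (C.comm hs hτ)
        simp only [ContinuousLinearMap.comp_apply] at h
        rw [h, hPz, map_zero]
      have hWs0 : ⟪W s z, z⟫ ≤ 0 := by
        have h := h4 s z hs
        rwa [hPz, sub_zero] at h
      have hWt : -⟪W t y, y⟫ ≤ K * (Real.exp (-2 * (γ - β) * t) * ‖y‖ ^ 2) := by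
        have h := (neg_le_abs _).trans (h2 t y ht0)
        rw [hPty, sub_zero, norm_zero] at h
        calc -⟪W t y, y⟫
            ≤ K * (Real.exp (2 * (γ + β) * t) * 0 ^ 2
              + Real.exp (-2 * (γ - β) * t) * ‖y‖ ^ 2) := h
          _ = K * (Real.exp (-2 * (γ - β) * t) * ‖y‖ ^ 2) := by ring
      have hI : (∫ τ in s..t, ‖H τ (E.U τ s z)‖ ^ 2)
          ≤ K * (Real.exp (-2 * (γ - β) * t) * ‖y‖ ^ 2) := by linarith
      have hint1 : IntervalIntegrable (fun τ => ‖H τ (E.U τ s z)‖ ^ 2) volume s (s + 1) :=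
        (((contHU s z).norm.pow 2)).intervalIntegrable _ _
      have hint2 : IntervalIntegrable (fun τ => ‖H τ (E.U τ s z)‖ ^ 2) volume (s + 1) t :=
        (((contHU s z).norm.pow 2)).intervalIntegrable _ _
      have hsplit := intervalIntegral.integral_add_adjacent_intervals hint1 hint2
      have hnn : 0 ≤ ∫ τ in (s + 1)..t, ‖H τ (E.U τ s z)‖ ^ 2 :=
        intervalIntegral.integral_nonneg (by linarith) (fun τ _ => by positivity)
      have hI2 : (∫ τ in s..(s + 1), ‖H τ (E.U τ s z)‖ ^ 2)
          ≤ K * (Real.exp (-2 * (γ - β) * t) * ‖y‖ ^ 2) := by linarith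
      have hpt : ∀ τ ∈ Set.Icc s (s + 1),
          Real.exp (-(b * (s + 1))) * Real.exp (ω * s) ^ 2 * ‖z‖ ^ 2
            ≤ M ^ 2 * Real.exp (ε * s) ^ 2 * ‖H τ (E.U τ s z)‖ ^ 2 := by
        intro τ hτ
        have hsτ : s ≤ τ := hτ.1
        have hzeq : C.UQ s τ (E.U τ s z) = z := by
          have h := C.left_inv z hs hsτ
          rwa [hPz, sub_zero] at h
        have hgrow := C.growQ (E.U τ s z) hs hsτ
        rw [hQu τ hsτ, sub_zero, hzeq] at hgrow
        have hHn : ‖H τ (E.U τ s z)‖ = Real.exp (-γ * τ) * ‖E.U τ s z‖ := by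
          rw [hH τ (E.U τ s z), hQu τ hsτ, smul_zero, zero_add, sub_zero, norm_smul,
            Real.norm_eq_abs, abs_of_pos (Real.exp_pos _)]
        rw [hHn]
        have hg2 : ‖z‖ ^ 2
            ≤ M ^ 2 * Real.exp (ε * s) ^ 2 * Real.exp (ω * (τ - s)) ^ 2
              * ‖E.U τ s z‖ ^ 2 := by
          have h := pow_le_pow_left₀ (norm_nonneg _) hgrow 2
          calc ‖z‖ ^ 2
              ≤ (M * Real.exp (ε * s) * Real.exp (ω * (τ - s)) * ‖E.U τ s z‖) ^ 2 := h
            _ = M ^ 2 * Real.exp (ε * s) ^ 2 * Real.exp (ω * (τ - s)) ^ 2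
                * ‖E.U τ s z‖ ^ 2 := by ring
        have hexp : Real.exp (-(b * (s + 1))) * Real.exp (ω * s) ^ 2
              * Real.exp (ω * (τ - s)) ^ 2
            ≤ Real.exp (-γ * τ) ^ 2 := by
          rw [exp_sq', exp_sq', exp_sq', ← Real.exp_add, ← Real.exp_add]
          apply Real.exp_le_exp.2
          rw [hb]
          nlinarith [mul_nonneg (by linarith : (0:ℝ) ≤ 2 * (γ + ω))
            (sub_nonneg.2 hτ.2)]
        calc Real.exp (-(b * (s + 1))) * Real.exp (ω * s) ^ 2 * ‖z‖ ^ 2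
            ≤ Real.exp (-(b * (s + 1))) * Real.exp (ω * s) ^ 2
              * (M ^ 2 * Real.exp (ε * s) ^ 2 * Real.exp (ω * (τ - s)) ^ 2
                * ‖E.U τ s z‖ ^ 2) := by gcongr
          _ = (Real.exp (-(b * (s + 1))) * Real.exp (ω * s) ^ 2
              * Real.exp (ω * (τ - s)) ^ 2)
              * (M ^ 2 * Real.exp (ε * s) ^ 2 * ‖E.U τ s z‖ ^ 2) := by ring
          _ ≤ Real.exp (-γ * τ) ^ 2
              * (M ^ 2 * Real.exp (ε * s) ^ 2 * ‖E.U τ s z‖ ^ 2) :=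
              mul_le_mul_of_nonneg_right hexp (by positivity)
          _ = M ^ 2 * Real.exp (ε * s) ^ 2
              * (Real.exp (-γ * τ) * ‖E.U τ s z‖) ^ 2 := by ring
      have hmono := intervalIntegral.integral_mono_on (μ := volume) (by linarith : s ≤ s + 1)
        intervalIntegrable_const
        ((continuous_const.mul ((contHU s z).norm.pow 2)).intervalIntegrable _ _) hpt
      simp only [Pi.mul_apply, Pi.pow_apply] at hmono
      rw [intervalIntegral.integral_const, show s + 1 - s = (1:ℝ) by ring, one_smul,
        intervalIntegral.integral_const_mul] at hmono
      have hfinal : Real.exp (-(b * (s + 1))) * Real.exp (ω * s) ^ 2 * ‖z‖ ^ 2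
          ≤ M ^ 2 * Real.exp (ε * s) ^ 2
            * (K * (Real.exp (-2 * (γ - β) * t) * ‖y‖ ^ 2)) := by
        have h' := mul_le_mul_of_nonneg_left hI2
          (by positivity : (0:ℝ) ≤ M ^ 2 * Real.exp (ε * s) ^ 2)
        linarith
      have hpos : 0 < Real.exp (-(b * (s + 1))) * Real.exp (ω * s) ^ 2 := by positivity
      have hgoal2 : ‖z‖ ^ 2
          ≤ (N₂ * Real.exp (α₁ * t) * Real.exp (-ν₂ * (t - s)) * ‖y‖) ^ 2 := by
        rw [← mul_le_mul_iff_right₀ hpos]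
        refine le_trans hfinal ?_
        have hid : Real.exp b * (Real.exp (-(b * (s + 1))) * Real.exp (ω * s) ^ 2
              * (Real.exp (α₁ * t) * Real.exp (-ν₂ * (t - s))) ^ 2)
            = Real.exp (ε * s) ^ 2 * Real.exp (-2 * (γ - β) * t) := by
          rw [← Real.exp_add (α₁ * t), exp_sq', exp_sq', exp_sq', ← Real.exp_add,
            ← Real.exp_add, ← Real.exp_add, ← Real.exp_add]
          congr 1
          rw [hb, hα₁, hν₂]; ring
        have hDN : M ^ 2 * K * Real.exp b ≤ N₂ ^ 2 := by
          have h1 : M ^ 2 * K * Real.exp b ≤ N₂ := by rw [hN₂]; linarith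
          nlinarith [hN₂1]
        calc M ^ 2 * Real.exp (ε * s) ^ 2
              * (K * (Real.exp (-2 * (γ - β) * t) * ‖y‖ ^ 2))
            = (M ^ 2 * K) * (Real.exp (ε * s) ^ 2 * Real.exp (-2 * (γ - β) * t))
              * ‖y‖ ^ 2 := by ring
          _ = (M ^ 2 * K * Real.exp b) * (Real.exp (-(b * (s + 1)))
              * Real.exp (ω * s) ^ 2
              * (Real.exp (α₁ * t) * Real.exp (-ν₂ * (t - s))) ^ 2) * ‖y‖ ^ 2 := by
              rw [← hid]; ring
          _ ≤ N₂ ^ 2 * (Real.exp (-(b * (s + 1))) * Real.exp (ω * s) ^ 2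
              * (Real.exp (α₁ * t) * Real.exp (-ν₂ * (t - s))) ^ 2) * ‖y‖ ^ 2 := by
              gcongr
          _ = Real.exp (-(b * (s + 1))) * Real.exp (ω * s) ^ 2
              * (N₂ * Real.exp (α₁ * t) * Real.exp (-ν₂ * (t - s)) * ‖y‖) ^ 2 := by ring
      exact le_of_pow_le_pow_left₀ two_ne_zero (by positivity) hgoal2
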